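/- Characterization of Klee sets: the following are equivalent: (i) every y ∈ U has a unique farthest point in C w.r.t. D_f; (ii) the farthest-point map is single-valued and continuous on U; (iii) y* ↦ sup_{c∈C} D_f(c, ∇f*(y*)) is continuously differentiable on ℝ^J; (iv) −f∨ + ι_{−C} is convex; (v) C is a singleton. -/

import Mathlib

open scoped RealInnerProductSpace

/-- Bregman distance for real-valued `f` with gradient `f'`. -/
noncomputable abbrev bregman {J : ℕ}
    (f : EuclideanSpace ℝ (Fin J) → ℝ) (f' : EuclideanSpace ℝ (Fin J) → EuclideanSpace ℝ (Fin J))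
    (x y : EuclideanSpace ℝ (Fin J)) : ℝ :=
  f x - f y - ⟪f' y, x - y⟫



variable {J : ℕ}

/-- Subgradient inequality for a convex differentiable function. -/
lemma grad_ineq {f : EuclideanSpace ℝ (Fin J) → ℝ} {U : Set (EuclideanSpace ℝ (Fin J))}
    (hconv : ConvexOn ℝ U f) {y G : EuclideanSpace ℝ (Fin J)} (hy : y ∈ U)
    (hG : HasGradientAt f G y) {z : EuclideanSpace ℝ (Fin J)} (hz : z ∈ U) :
    f y + ⟪G, z - y⟫ ≤ f z := by
  have hline : HasDerivAt (fun t : ℝ => f (y + t • (z - y))) ⟪G, z - y⟫ 0 := by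
    have h1 : HasDerivAt (fun t : ℝ => y + t • (z - y)) (z - y) 0 := by
      simpa using ((hasDerivAt_id (0:ℝ)).smul_const (z - y)).const_add y
    have h2 : HasFDerivAt f (InnerProductSpace.toDual ℝ _ G) (y + (0:ℝ) • (z - y)) := by
      simpa using hG.hasFDerivAt
    have := h2.comp_hasDerivAt (0:ℝ) h1
    simp only [InnerProductSpace.toDual_apply_apply] at this; exact this
  have hslope : ∀ t ∈ Set.Ioo (0:ℝ) 1,
      (f (y + t • (z - y)) - f y) / t ≤ f z - f y := by
    intro t ht
    have hcomb := hconv.2 hy hz (by linarith [ht.1, ht.2] : (0:ℝ) ≤ 1 - t) (le_of_lt ht.1)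
      (by ring)
    have heq : (1 - t) • y + t • z = y + t • (z - y) := by
      module
    rw [heq] at hcomb
    rw [div_le_iff₀ ht.1]
    have : f (y + t • (z - y)) ≤ (1 - t) * f y + t * f z := hcomb
    nlinarith
  have htend : Filter.Tendsto (fun t : ℝ => (f (y + t • (z - y)) - f y) / t)
      (nhdsWithin 0 (Set.Ioi 0)) (nhds ⟪G, z - y⟫) := by
    have := hline.tendsto_slope_zero_right
    simpa [div_eq_inv_mul] using this
  have hle : ⟪G, z - y⟫ ≤ f z - f y := by
    refine le_of_tendsto htend ?_
    filter_upwards [Ioo_mem_nhdsGT_of_mem (Set.mem_Ico.2 ⟨le_refl (0:ℝ), one_pos⟩)] with t ht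
    exact hslope t ht
  linarith

/-- Strict subgradient inequality for a strictly convex differentiable function. -/
lemma grad_strict_ineq {f : EuclideanSpace ℝ (Fin J) → ℝ} {U : Set (EuclideanSpace ℝ (Fin J))}
    (hconv : StrictConvexOn ℝ U f) {y G : EuclideanSpace ℝ (Fin J)} (hy : y ∈ U)
    (hG : HasGradientAt f G y) {z : EuclideanSpace ℝ (Fin J)} (hz : z ∈ U) (hne : z ≠ y) :
    f y + ⟪G, z - y⟫ < f z := by
  have hmemU : (1/2 : ℝ) • y + (1/2 : ℝ) • z ∈ U :=
    hconv.1 hy hz (by norm_num) (by norm_num) (by norm_num)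
  have hmid : f ((1/2 : ℝ) • y + (1/2 : ℝ) • z) < (1/2 : ℝ) * f y + (1/2 : ℝ) * f z :=
    hconv.2 hy hz (Ne.symm hne) (by norm_num) (by norm_num) (by norm_num)
  have hineq := grad_ineq hconv.convexOn hy hG hmemU
  have hdiff : ((1/2 : ℝ) • y + (1/2 : ℝ) • z) - y = (1/2 : ℝ) • (z - y) := by module
  rw [hdiff, real_inner_smul_right] at hineq
  linarith

section Setup

variable {f : EuclideanSpace ℝ (Fin J) → ℝ} {U : Set (EuclideanSpace ℝ (Fin J))}
  {f' g : EuclideanSpace ℝ (Fin J) → EuclideanSpace ℝ (Fin J)}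

/-- Subgradient inequality for the conjugate-like function `fstar`. -/
lemma fstar_subgrad (hconv : ConvexOn ℝ U f)
    (hf' : ∀ y ∈ U, HasGradientAt f (f' y) y)
    (hgU : ∀ s, g s ∈ U) (hgr : ∀ s, f' (g s) = s) (s t : EuclideanSpace ℝ (Fin J)) :
    (⟪t, g t⟫ - f (g t)) + ⟪g t, s - t⟫ ≤ ⟪s, g s⟫ - f (g s) := by
  have hgrad : HasGradientAt f s (g s) := by
    have := hf' (g s) (hgU s); rwa [hgr s] at this
  have h := grad_ineq hconv (hgU s) hgrad (hgU t)
  simp only [inner_sub_right, inner_sub_left] at h ⊢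
  have h1 : ⟪t, g t⟫ = ⟪g t, t⟫ := real_inner_comm _ _
  have h2 : ⟪s, g t⟫ = ⟪g t, s⟫ := real_inner_comm _ _
  linarith

/-- `fstar` has gradient `g`. -/
lemma fstar_grad (hconv : ConvexOn ℝ U f)
    (hf' : ∀ y ∈ U, HasGradientAt f (f' y) y)
    (hgU : ∀ s, g s ∈ U) (hgr : ∀ s, f' (g s) = s) (hgcont : Continuous g)
    (t : EuclideanSpace ℝ (Fin J)) :
    HasGradientAt (fun s => ⟪s, g s⟫ - f (g s)) (g t) t := by
  rw [hasGradientAt_iff_isLittleO]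
  rw [Asymptotics.isLittleO_iff]
  intro ε hε
  have hcont : Filter.Tendsto (fun s => ‖g s - g t‖) (nhds t) (nhds 0) := by
    have : Filter.Tendsto (fun s => g s - g t) (nhds t) (nhds (g t - g t)) :=
      (hgcont.tendsto t).sub tendsto_const_nhds
    simpa using this.norm
  filter_upwards [hcont.eventually_le_const hε] with s hs
  have hlow := fstar_subgrad hconv hf' hgU hgr s t
  have hupp := fstar_subgrad hconv hf' hgU hgr t s
  set A := (⟪s, g s⟫ - f (g s)) - (⟪t, g t⟫ - f (g t)) - ⟪g t, s - t⟫ with hA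
  have hA0 : 0 ≤ A := by simp only [hA]; linarith
  have hA1 : A ≤ ⟪g s - g t, s - t⟫ := by
    simp only [hA, inner_sub_left, inner_sub_right] at *
    have h2 : ⟪g s, t - s⟫ = ⟪t, g s⟫ - ⟪s, g s⟫ := by
      rw [inner_sub_right]; rw [real_inner_comm (g s) t, real_inner_comm (g s) s]
    have h3 : ⟪g s, t⟫ = ⟪t, g s⟫ := real_inner_comm _ _
    have h4 : ⟪g s, s⟫ = ⟪s, g s⟫ := real_inner_comm _ _
    linarith
  have : ‖A‖ ≤ ε * ‖s - t‖ := by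
    rw [Real.norm_eq_abs, abs_of_nonneg hA0]
    calc A ≤ ⟪g s - g t, s - t⟫ := hA1
    _ ≤ ‖g s - g t‖ * ‖s - t‖ := real_inner_le_norm _ _
    _ ≤ ε * ‖s - t‖ := by
        apply mul_le_mul_of_nonneg_right hs (norm_nonneg _)
  simpa [hA] using this

end Setup


/-- Stability of unique maximizers under perturbation of the linear tilt. -/
lemma argmax_stability {J : ℕ} {f : EuclideanSpace ℝ (Fin J) → ℝ}
    {C : Set (EuclideanSpace ℝ (Fin J))} (hCcp : IsCompact C)
    {U : Set (EuclideanSpace ℝ (Fin J))} (hCU : C ⊆ U)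
    (fcont : ∀ y ∈ U, ContinuousAt f y)
    {tb cb : EuclideanSpace ℝ (Fin J)}
    (hcbu : ∀ x, x ∈ C → (∀ c ∈ C, f c - ⟪tb, c⟫ ≤ f x - ⟪tb, x⟫) → x = cb)
    {η : ℝ} (hη : 0 < η) :
    ∃ δ > 0, ∀ t', dist t' tb < δ → ∀ x, x ∈ C →
      (∀ c ∈ C, f c - ⟪t', c⟫ ≤ f x - ⟪t', x⟫) → dist x cb < η := by
  by_contra hcon
  push_neg at hcon
  have hseq : ∀ n : ℕ, ∃ t' x, dist t' tb < 1/(n+1) ∧ x ∈ C ∧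
      (∀ c ∈ C, f c - ⟪t', c⟫ ≤ f x - ⟪t', x⟫) ∧ η ≤ dist x cb := by
    intro n
    obtain ⟨t', ht', x, hx1, hx2, hx3⟩ := hcon (1/(n+1)) (by positivity)
    exact ⟨t', x, ht', hx1, hx2, hx3⟩
  choose T X hT hXC hXmax hXd using hseq
  have hTtb : Filter.Tendsto T Filter.atTop (nhds tb) := by
    rw [tendsto_iff_dist_tendsto_zero]
    exact squeeze_zero (fun n => dist_nonneg) (fun n => (hT n).le)
      tendsto_one_div_add_atTop_nhds_zero_nat
  obtain ⟨a, haC, φ, hφ, hXa⟩ := hCcp.tendsto_subseq hXC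
  have hTa : Filter.Tendsto (T ∘ φ) Filter.atTop (nhds tb) := hTtb.comp hφ.tendsto_atTop
  have hamax : ∀ c ∈ C, f c - ⟪tb, c⟫ ≤ f a - ⟪tb, a⟫ := by
    intro c hc
    have h1 : Filter.Tendsto (fun n => f c - ⟪T (φ n), c⟫) Filter.atTop
        (nhds (f c - ⟪tb, c⟫)) :=
      tendsto_const_nhds.sub (hTa.inner tendsto_const_nhds)
    have h2 : Filter.Tendsto (fun n => f (X (φ n)) - ⟪T (φ n), X (φ n)⟫) Filter.atTop
        (nhds (f a - ⟪tb, a⟫)) := by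
      have hf2 : Filter.Tendsto (fun n => f (X (φ n))) Filter.atTop (nhds (f a)) :=
        ((fcont a (hCU haC)).tendsto).comp hXa
      exact hf2.sub (hTa.inner hXa)
    exact le_of_tendsto_of_tendsto' h1 h2 (fun n => hXmax (φ n) c hc)
  have haeq : a = cb := hcbu a haC hamax
  have hdd : Filter.Tendsto (fun n => dist (X (φ n)) cb) Filter.atTop
      (nhds (dist a cb)) := hXa.dist tendsto_const_nhds
  have hfin : η ≤ dist a cb := ge_of_tendsto' hdd (fun n => hXd (φ n))
  rw [haeq, dist_self] at hfin
  linarith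



section Key
variable {J : ℕ}
variable {f : EuclideanSpace ℝ (Fin J) → ℝ} {U : Set (EuclideanSpace ℝ (Fin J))}
  {f' g : EuclideanSpace ℝ (Fin J) → EuclideanSpace ℝ (Fin J)}


/-- If for every `t` the function `c ↦ f c - ⟪t, c⟫` has a unique maximizer on `C`,
then `C` is a singleton. -/
lemma key_singleton (hU : IsOpen U) (hconv : StrictConvexOn ℝ U f)
    (hf' : ∀ y ∈ U, HasGradientAt f (f' y) y)
    (hgU : ∀ s, g s ∈ U) (hgr : ∀ s, f' (g s) = s) (hgcont : Continuous g)
    {C : Set (EuclideanSpace ℝ (Fin J))} (hCne : C.Nonempty)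
    (hCcp : IsCompact C) (hCU : C ⊆ U)
    (hmax : ∀ t, ∃! x, x ∈ C ∧ ∀ c ∈ C, f c - ⟪t, c⟫ ≤ f x - ⟪t, x⟫) :
    ∃ c, C = {c} := by
  classical
  have fcont : ∀ y ∈ U, ContinuousAt f y := fun y hy => (hf' y hy).continuousAt
  have hgrad : ∀ t, HasGradientAt f t (g t) := by
    intro t; have := hf' (g t) (hgU t); rwa [hgr t] at this
  set v : EuclideanSpace ℝ (Fin J) → EuclideanSpace ℝ (Fin J) → ℝ :=
    fun t c => f c - ⟪t, c⟫ with hv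
  set fs : EuclideanSpace ℝ (Fin J) → ℝ := fun t => ⟪t, g t⟫ - f (g t) with hfs
  set σ : EuclideanSpace ℝ (Fin J) → ℝ := fun t => sSup (v t '' C) with hσ
  set F : EuclideanSpace ℝ (Fin J) → ℝ := fun t => fs t + σ t with hF
  -- continuity of v in c
  have vcont : ∀ t, ContinuousOn (v t) C := by
    intro t
    intro c hc
    exact ((fcont c (hCU hc)).continuousWithinAt).sub
      ((continuous_const.inner continuous_id).continuousWithinAt)
  have bdd : ∀ t, BddAbove (v t '' C) :=
    fun t => (hCcp.image_of_continuousOn (vcont t)).bddAbove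
  -- value of σ at an argmax
  have σval : ∀ t x, x ∈ C → (∀ c ∈ C, v t c ≤ v t x) → σ t = v t x := by
    intro t x hx hmx
    refine IsGreatest.csSup_eq ⟨Set.mem_image_of_mem _ hx, ?_⟩
    rintro _ ⟨c, hc, rfl⟩; exact hmx c hc
  have σle : ∀ t c, c ∈ C → v t c ≤ σ t := fun t c hc => le_csSup (bdd t) ⟨c, hc, rfl⟩
  -- Fenchel-Young
  have fy : ∀ t, ∀ z ∈ U, ⟪t, z⟫ - f z ≤ fs t := by
    intro t z hz
    have h := grad_ineq hconv.convexOn (hgU t) (hgrad t) hz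
    simp only [hfs, inner_sub_right] at h ⊢
    linarith
  -- subgradient inequality for fs
  have fssub : ∀ s t, fs t + ⟪g t, s - t⟫ ≤ fs s :=
    fun s t => fstar_subgrad hconv.convexOn hf' hgU hgr s t
  -- continuity of F
  have fscont : Continuous fs := by
    refine (continuous_id.inner hgcont).sub ?_
    rw [continuous_iff_continuousAt]
    exact fun t => (fcont (g t) (hgU t)).comp hgcont.continuousAt
  obtain ⟨R, hR⟩ := hCcp.isBounded.exists_norm_le
  have hR0 : 0 ≤ R := le_trans (norm_nonneg _) (hR _ hCne.choose_spec)
  have σlip : ∀ s t, σ s ≤ σ t + R * ‖s - t‖ := by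
    intro s t
    obtain ⟨x, hx⟩ := hmax s
    have hval := σval s x hx.1.1 hx.1.2
    rw [hval]
    have h1 : v s x = v t x + ⟪t - s, x⟫ := by
      simp only [hv, inner_sub_left]; ring
    rw [h1]
    have h2 : ⟪t - s, x⟫ ≤ R * ‖s - t‖ := by
      calc ⟪t - s, x⟫ ≤ ‖t - s‖ * ‖x‖ := real_inner_le_norm _ _
      _ ≤ ‖t - s‖ * R := by
          exact mul_le_mul_of_nonneg_left (hR x hx.1.1) (norm_nonneg _)
      _ = R * ‖s - t‖ := by rw [norm_sub_rev]; ring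
    linarith [σle t x hx.1.1]
  have σcont : Continuous σ := by
    rw [Metric.continuous_iff]
    intro t ε hε
    rcases eq_or_lt_of_le hR0 with hR0' | hR0'
    · exact ⟨1, one_pos, fun s _ => by
        have h1 := σlip s t
        have h2 := σlip t s
        rw [← hR0'] at h1 h2
        simp only [zero_mul] at h1 h2
        have : σ s = σ t := le_antisymm (by linarith) (by linarith)
        simpa [Real.dist_eq, this] using hε⟩
    · refine ⟨ε / R, div_pos hε hR0', fun s hs => ?_⟩
      rw [Real.dist_eq, abs_lt]
      have h1 := σlip s t
      have h2 := σlip t s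
      have hd : ‖s - t‖ < ε / R := by rwa [dist_eq_norm] at hs
      have h3 : R * ‖s - t‖ < ε := by
        rw [← lt_div_iff₀' hR0']; exact hd
      have h4 : ‖t - s‖ = ‖s - t‖ := norm_sub_rev _ _
      rw [h4] at h2
      constructor <;> linarith
  have Fcont : Continuous F := fscont.add σcont
  -- coercivity setup
  obtain ⟨c₁, hc₁⟩ := hCne
  obtain ⟨ε, hε, hball⟩ := Metric.isOpen_iff.1 hU c₁ (hCU hc₁)
  set ε' := ε / 2 with hε'
  have hε'0 : 0 < ε' := by positivity
  have hcb : Metric.closedBall c₁ ε' ⊆ U := by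
    intro z hz
    refine hball (Metric.mem_ball.2 (lt_of_le_of_lt (Metric.mem_closedBall.1 hz) ?_))
    rw [hε']; linarith
  obtain ⟨zM, hzM, hzMmax⟩ := (isCompact_closedBall c₁ ε').exists_isMaxOn
    ⟨c₁, Metric.mem_closedBall_self hε'0.le⟩
    (fun z hz => (fcont z (hcb hz)).continuousWithinAt)
  set M := f zM with hM
  have hMb : ∀ z ∈ Metric.closedBall c₁ ε', f z ≤ M := hzMmax
  have hMc₁ : f c₁ ≤ M := hMb c₁ (Metric.mem_closedBall_self hε'0.le)
  -- coercive bound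
  have coer : ∀ t, ε' * ‖t‖ - M + f c₁ ≤ F t := by
    intro t
    have hσc₁ : f c₁ - ⟪t, c₁⟫ ≤ σ t := σle t c₁ hc₁
    by_cases ht : t = 0
    · subst ht
      have h0 : (0:ℝ) - f c₁ ≤ fs 0 := by
        simpa using fy 0 c₁ (hCU hc₁)
      have hσ0 : f c₁ ≤ σ 0 := by
        simpa [hv] using σle 0 c₁ hc₁
      simp only [norm_zero, mul_zero, hF]
      linarith
    · set z := c₁ + (ε' / ‖t‖) • t with hz
      have htn : 0 < ‖t‖ := norm_pos_iff.2 ht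
      have hzball : z ∈ Metric.closedBall c₁ ε' := by
        rw [Metric.mem_closedBall, dist_eq_norm, hz]
        simp only [add_sub_cancel_left]
        rw [norm_smul, Real.norm_eq_abs, abs_of_nonneg (by positivity)]
        rw [div_mul_cancel₀ _ htn.ne']
      have hfz : ⟪t, z⟫ - f z ≤ fs t := fy t z (hcb hzball)
      have hinz : ⟪t, z⟫ = ⟪t, c₁⟫ + ε' * ‖t‖ := by
        rw [hz, inner_add_right, real_inner_smul_right, real_inner_self_eq_norm_mul_norm]
        rw [show ε' / ‖t‖ * (‖t‖ * ‖t‖) = ε' * ‖t‖ by field_simp]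
      have : ⟪t, c₁⟫ + ε' * ‖t‖ - M ≤ fs t := by
        rw [← hinz]; linarith [hMb z hzball]
      simp only [hF]
      linarith
  -- existence of a global minimizer
  set R₀ := max 1 ((F 0 + M - f c₁ + 1) / ε') with hR₀def
  have hR₀pos : 0 < R₀ := lt_of_lt_of_le one_pos (le_max_left _ _)
  obtain ⟨tb, htbK, htbmin⟩ := (isCompact_closedBall (0:EuclideanSpace ℝ (Fin J)) R₀).exists_isMinOn
    ⟨0, Metric.mem_closedBall_self hR₀pos.le⟩ Fcont.continuousOn
  have hglobal : ∀ t, F tb ≤ F t := by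
    intro t
    by_cases ht : t ∈ Metric.closedBall (0:EuclideanSpace ℝ (Fin J)) R₀
    · exact htbmin ht
    · have htn : R₀ < ‖t‖ := by
        rw [Metric.mem_closedBall, dist_zero_right, not_le] at ht
        exact ht
      have h1 : ε' * R₀ ≥ F 0 + M - f c₁ + 1 := by
        have : (F 0 + M - f c₁ + 1) / ε' ≤ R₀ := le_max_right _ _
        calc F 0 + M - f c₁ + 1 = ε' * ((F 0 + M - f c₁ + 1) / ε') := by
              field_simp
        _ ≤ ε' * R₀ := mul_le_mul_of_nonneg_left this hε'0.le
      have h2 := coer t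
      have h3 : ε' * R₀ < ε' * ‖t‖ := by
        exact mul_lt_mul_of_pos_left htn hε'0
      have h4 : F tb ≤ F 0 := htbmin (Metric.mem_closedBall_self hR₀pos.le)
      linarith
  -- the farthest point from tb
  obtain ⟨cb, hcb', hcbu⟩ := hmax tb
  have hcbC : cb ∈ C := hcb'.1
  have hcbmax : ∀ c ∈ C, v tb c ≤ v tb cb := hcb'.2
  -- Claim: cb = g tb
  have hkey : cb = g tb := by
    by_contra hne
    set u := g tb - cb with hu
    have hu0 : u ≠ 0 := sub_ne_zero.2 (fun h => hne h.symm)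
    have hu2 : 0 < ‖u‖ ^ 2 := pow_pos (norm_pos_iff.mpr hu0) 2
    have hun : 0 < ‖u‖ := norm_pos_iff.mpr hu0
    -- stability of maximizers
    have stab : ∀ η > 0, ∃ δ > 0, ∀ t', dist t' tb < δ →
        ∀ x, x ∈ C → (∀ c ∈ C, v t' c ≤ v t' x) → dist x cb < η := by
      intro η hη
      exact argmax_stability hCcp hCU fcont (fun x hx hmx => hcbu x ⟨hx, hmx⟩) hη
    -- a neighborhood on which the inner product is strictly negative
    have hcontmap : ContinuousAt
        (fun p : EuclideanSpace ℝ (Fin J) × EuclideanSpace ℝ (Fin J) => (⟪u, p.1 - g p.2⟫ : ℝ))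
        (cb, tb) :=
      (continuous_const.inner (continuous_fst.sub (hgcont.comp continuous_snd))).continuousAt
    have hval : (⟪u, cb - g tb⟫ : ℝ) = -‖u‖^2 := by
      rw [show cb - g tb = -u by rw [hu]; abel]
      rw [inner_neg_right, real_inner_self_eq_norm_sq]
    have hev : {p : EuclideanSpace ℝ (Fin J) × EuclideanSpace ℝ (Fin J) |
        (⟪u, p.1 - g p.2⟫ : ℝ) < -‖u‖^2/2} ∈ nhds (cb, tb) := by
      refine hcontmap (Iio_mem_nhds ?_)
      show (⟪u, cb - g tb⟫ : ℝ) < -‖u‖^2/2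
      rw [hval]; linarith
    obtain ⟨ρ, hρ, hballp⟩ := Metric.mem_nhds_iff.1 hev
    obtain ⟨δ, hδ, hstab⟩ := stab ρ hρ
    set s := (min δ ρ) / (2 * ‖u‖) with hsdef
    have hmin : 0 < min δ ρ := lt_min hδ hρ
    have hs : 0 < s := by positivity
    set t' := tb - s • u with ht'def
    have hdist : dist t' tb < min δ ρ := by
      rw [dist_eq_norm, ht'def]
      rw [show tb - s • u - tb = -(s • u) by abel]
      rw [norm_neg, norm_smul, Real.norm_eq_abs, abs_of_pos hs, hsdef]
      rw [div_mul_eq_mul_div, show min δ ρ * ‖u‖ / (2 * ‖u‖) = min δ ρ / 2 by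
        field_simp]
      linarith
    obtain ⟨xs, ⟨hxsC, hxsmax⟩, _⟩ := hmax t'
    have hdxs : dist xs cb < ρ :=
      hstab t' (lt_of_lt_of_le hdist (min_le_left _ _)) xs hxsC hxsmax
    have hmem : (xs, t') ∈ Metric.ball (cb, tb) ρ := by
      rw [Metric.mem_ball, Prod.dist_eq]
      exact max_lt hdxs (lt_of_lt_of_le hdist (min_le_right _ _))
    have hlt : (⟪u, xs - g t'⟫ : ℝ) < -‖u‖^2/2 := hballp hmem
    -- the descent computation
    have hσt' : σ t' = v t' xs := σval t' xs hxsC hxsmax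
    have e1 : v t' xs = v tb xs + s * ⟪u, xs⟫ := by
      simp only [hv, ht'def, inner_sub_left, real_inner_smul_left]
      ring
    have e2 : v tb xs ≤ σ tb := σle tb xs hxsC
    have e3 : fs t' + ⟪g t', tb - t'⟫ ≤ fs tb := fssub tb t'
    have e4 : tb - t' = s • u := by rw [ht'def]; abel
    rw [e4, real_inner_smul_right] at e3
    have e5 : (⟪g t', u⟫ : ℝ) = ⟪u, g t'⟫ := real_inner_comm _ _
    have e6 : (⟪u, xs - g t'⟫ : ℝ) = ⟪u, xs⟫ - ⟪u, g t'⟫ := inner_sub_right _ _ _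
    have hFt' : F t' ≤ F tb + s * ⟪u, xs - g t'⟫ := by
      simp only [hF]
      rw [hσt', e1, e6]
      nlinarith [e2, e3, e5]
    have hdesc : F t' < F tb := by
      have h7 : s * (⟪u, xs - g t'⟫ : ℝ) < s * (-‖u‖^2/2) :=
        mul_lt_mul_of_pos_left hlt hs
      have h8 : 0 < s * (‖u‖^2/2) := mul_pos hs (by linarith)
      have h9 : s * (-‖u‖^2/2) = -(s * (‖u‖^2/2)) := by ring
      rw [h9] at h7
      linarith
    exact absurd (hglobal t') (not_le.mpr hdesc)
  -- conclude: C = {cb}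
  refine ⟨cb, Set.eq_singleton_iff_unique_mem.2 ⟨hcbC, fun c hc => ?_⟩⟩
  by_contra hne
  have hstrict := grad_strict_ineq hconv (hgU tb) (hgrad tb) (hCU hc)
    (by rw [← hkey]; exact hne)
  have hle := hcbmax c hc
  rw [hkey] at hle
  simp only [hv, inner_sub_right] at hle hstrict
  rw [hkey] at hne
  linarith
end Key


section Aux
variable {J : ℕ}

lemma hasGradientAt_add' {f h : EuclideanSpace ℝ (Fin J) → ℝ} {a b x : EuclideanSpace ℝ (Fin J)}
    (hf : HasGradientAt f a x) (hh : HasGradientAt h b x) :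
    HasGradientAt (fun y => f y + h y) (a + b) x := by
  rw [hasGradientAt_iff_hasFDerivAt, map_add]
  exact hf.hasFDerivAt.add hh.hasFDerivAt

lemma hasGradientAt_sub' {f h : EuclideanSpace ℝ (Fin J) → ℝ} {a b x : EuclideanSpace ℝ (Fin J)}
    (hf : HasGradientAt f a x) (hh : HasGradientAt h b x) :
    HasGradientAt (fun y => f y - h y) (a - b) x := by
  rw [hasGradientAt_iff_hasFDerivAt, map_sub]
  exact hf.hasFDerivAt.sub hh.hasFDerivAt

lemma hasGradientAt_inner_right (c x : EuclideanSpace ℝ (Fin J)) :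
    HasGradientAt (fun t => (⟪t, c⟫ : ℝ)) c x := by
  have h : HasGradientAt (fun t : EuclideanSpace ℝ (Fin J) => (⟪c, t⟫ : ℝ)) c x :=
    (InnerProductSpace.toDual ℝ (EuclideanSpace ℝ (Fin J)) c).hasFDerivAt
  exact h.congr_of_eventuallyEq (Filter.Eventually.of_forall fun t => real_inner_comm _ _)

/-- An affine minorant touching at a point of differentiability determines the gradient. -/
lemma argmax_eq_neg_grad {σ : EuclideanSpace ℝ (Fin J) → ℝ}
    {w t y : EuclideanSpace ℝ (Fin J)} {A : ℝ}
    (hσ : HasGradientAt σ w t) (hmin : ∀ s, A - ⟪s, y⟫ ≤ σ s) (htouch : A - ⟪t, y⟫ = σ t) :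
    y = -w := by
  have hz : ∀ z : EuclideanSpace ℝ (Fin J), -⟪z, y⟫ ≤ (⟪w, z⟫ : ℝ) := by
    intro z
    have hline : HasDerivAt (fun r : ℝ => σ (t + r • z)) ⟪w, z⟫ 0 := by
      have h1 : HasDerivAt (fun r : ℝ => t + r • z) z 0 := by
        simpa using ((hasDerivAt_id (0:ℝ)).smul_const z).const_add t
      have h2 : HasFDerivAt σ (InnerProductSpace.toDual ℝ _ w) (t + (0:ℝ) • z) := by
        simpa using hσ.hasFDerivAt
      have := h2.comp_hasDerivAt (0:ℝ) h1
      simp only [InnerProductSpace.toDual_apply_apply] at this; exact this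
    have htend : Filter.Tendsto (fun r : ℝ => (σ (t + r • z) - σ t) / r)
        (nhdsWithin 0 (Set.Ioi 0)) (nhds ⟪w, z⟫) := by
      have := hline.tendsto_slope_zero_right
      simpa [div_eq_inv_mul] using this
    refine ge_of_tendsto htend ?_
    filter_upwards [self_mem_nhdsWithin] with r hr
    have hrpos : 0 < r := hr
    have h3 : σ t - r * ⟪z, y⟫ ≤ σ (t + r • z) := by
      have := hmin (t + r • z)
      rw [inner_add_left, real_inner_smul_left] at this
      linarith
    rw [le_div_iff₀ hrpos]
    linarith
  have h0 : (⟪y + w, y + w⟫ : ℝ) ≤ 0 := by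
    have h1 := hz (-(y + w))
    rw [inner_neg_left, inner_neg_right] at h1
    have h2 : (⟪y + w, y⟫ : ℝ) ≤ -⟪w, y + w⟫ := by linarith
    have h3 : (⟪w, y + w⟫ : ℝ) = ⟪y + w, w⟫ := real_inner_comm _ _
    have h4 : (⟪y + w, y⟫ : ℝ) + ⟪y + w, w⟫ = ⟪y + w, y + w⟫ := (inner_add_right _ _ _).symm
    linarith
  have h5 : y + w = 0 := real_inner_self_nonpos.1 h0
  exact eq_neg_of_add_eq_zero_left h5

/-- Decomposition of the Bregman farthest-distance function. -/
lemma sup_decomp {f : EuclideanSpace ℝ (Fin J) → ℝ} {U : Set (EuclideanSpace ℝ (Fin J))}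
    {f' g : EuclideanSpace ℝ (Fin J) → EuclideanSpace ℝ (Fin J)}
    (hf' : ∀ y ∈ U, HasGradientAt f (f' y) y) (hgU : ∀ s, g s ∈ U) (hgr : ∀ s, f' (g s) = s)
    {C : Set (EuclideanSpace ℝ (Fin J))} (hCne : C.Nonempty) (hCcp : IsCompact C) (hCU : C ⊆ U)
    (t : EuclideanSpace ℝ (Fin J)) :
    sSup ((fun c => bregman f f' c (g t)) '' C)
      = (⟪t, g t⟫ - f (g t)) + sSup ((fun c => f c - ⟪t, c⟫) '' C) := by
  have hvc : ContinuousOn (fun c => f c - (⟪t, c⟫ : ℝ)) C := fun c hc =>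
    ((hf' c (hCU hc)).continuousAt.continuousWithinAt).sub
      ((continuous_const.inner continuous_id).continuousWithinAt)
  obtain ⟨x, hxC, hxm⟩ := hCcp.exists_isMaxOn hCne hvc
  have hxm' : ∀ c ∈ C, f c - ⟪t, c⟫ ≤ f x - (⟪t, x⟫ : ℝ) := hxm
  have hE : ∀ c, bregman f f' c (g t) = (f c - ⟪t, c⟫) + (⟪t, g t⟫ - f (g t)) := by
    intro c; simp only [bregman, hgr, inner_sub_right]; ring
  have h1 : sSup ((fun c => f c - (⟪t, c⟫ : ℝ)) '' C) = f x - ⟪t, x⟫ :=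
    IsGreatest.csSup_eq ⟨Set.mem_image_of_mem _ hxC, by
      rintro _ ⟨c, hc, rfl⟩; exact hxm' c hc⟩
  have h2 : sSup ((fun c => bregman f f' c (g t)) '' C) = bregman f f' x (g t) :=
    IsGreatest.csSup_eq ⟨Set.mem_image_of_mem _ hxC, by
      rintro _ ⟨c, hc, rfl⟩
      show bregman f f' c (g t) ≤ bregman f f' x (g t)
      rw [hE c, hE x]
      linarith [hxm' c hc]⟩
  rw [h1, h2, hE x]
  ring

end Aux


/-- Characterization of `D_f`-Klee sets: uniqueness of farthest points, single-valuedness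
and continuity of the farthest-point map, continuous differentiability of
`y* ↦ sup_{c∈C} D_f(c, ∇f*(y*))`, convexity of `−f∨ + ι_{−C}`, and `C` being a
singleton are all equivalent. -/
theorem klee_set_characterizations {J : ℕ}
    (f : EuclideanSpace ℝ (Fin J) → ℝ) (U : Set (EuclideanSpace ℝ (Fin J)))
    (hU : IsOpen U) (hUne : U.Nonempty)
    (hconv : StrictConvexOn ℝ U f)
    (f' : EuclideanSpace ℝ (Fin J) → EuclideanSpace ℝ (Fin J))
    (hf' : ∀ y ∈ U, HasGradientAt f (f' y) y)
    (hcoer : Filter.Tendsto (fun x : EuclideanSpace ℝ (Fin J) => f x / ‖x‖)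
      (Filter.comap norm Filter.atTop) Filter.atTop)
    (g : EuclideanSpace ℝ (Fin J) → EuclideanSpace ℝ (Fin J))
    (hgU : ∀ s, g s ∈ U) (hgr : ∀ s, f' (g s) = s) (hgl : ∀ y ∈ U, g (f' y) = y)
    (hgcont : Continuous g)
    (C : Set (EuclideanSpace ℝ (Fin J))) (hCne : C.Nonempty)
    (hCcp : IsCompact C) (hCU : C ⊆ U) :
    List.TFAE
      [∀ y ∈ U, ∃! x, x ∈ C ∧ ∀ c ∈ C, bregman f f' c y ≤ bregman f f' x y,
       ∃ Q : EuclideanSpace ℝ (Fin J) → EuclideanSpace ℝ (Fin J), ContinuousOn Q U ∧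
         ∀ y ∈ U, Q y ∈ C ∧ (∀ c ∈ C, bregman f f' c y ≤ bregman f f' (Q y) y) ∧
           ∀ x ∈ C, (∀ c ∈ C, bregman f f' c y ≤ bregman f f' x y) → x = Q y,
       ∃ G : EuclideanSpace ℝ (Fin J) → EuclideanSpace ℝ (Fin J), Continuous G ∧
         ∀ s, HasGradientAt (fun t => sSup ((fun c => bregman f f' c (g t)) '' C)) (G s) s,
       ConvexOn ℝ (-C) (fun x => -f (-x)),
       ∃ c, C = {c}] := by
  have hE : ∀ t c, bregman f f' c (g t) = (f c - ⟪t, c⟫) + (⟪t, g t⟫ - f (g t)) := by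
    intro t c
    simp only [bregman, hgr, inner_sub_right]
    ring
  tfae_have 1 → 5 := by
    intro h1
    apply key_singleton hU hconv hf' hgU hgr hgcont hCne hCcp hCU
    intro t
    obtain ⟨x, ⟨hxC, hxm⟩, hxu⟩ := h1 (g t) (hgU t)
    refine ⟨x, ⟨hxC, fun c hc => ?_⟩, fun y hy => hxu y ⟨hy.1, fun c hc => ?_⟩⟩
    · have h := hxm c hc
      rw [hE t c, hE t x] at h
      linarith
    · rw [hE t c, hE t y]
      linarith [hy.2 c hc]
  tfae_have 3 → 5 := by
    rintro ⟨G, hGcont, hG⟩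
    apply key_singleton hU hconv hf' hgU hgr hgcont hCne hCcp hCU
    intro t
    have hvc : ∀ s, ContinuousOn (fun c => f c - (⟪s, c⟫ : ℝ)) C := fun s c hc =>
      ((hf' c (hCU hc)).continuousAt.continuousWithinAt).sub
        ((continuous_const.inner continuous_id).continuousWithinAt)
    have hbdd : ∀ s, BddAbove ((fun c => f c - (⟪s, c⟫ : ℝ)) '' C) :=
      fun s => (hCcp.image_of_continuousOn (hvc s)).bddAbove
    obtain ⟨x, hxC, hxm⟩ := hCcp.exists_isMaxOn hCne (hvc t)
    have hxm' : ∀ c ∈ C, f c - ⟪t, c⟫ ≤ f x - (⟪t, x⟫ : ℝ) := hxm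
    -- gradient of the sup function
    have hσgrad : HasGradientAt (fun s => sSup ((fun c => f c - (⟪s, c⟫ : ℝ)) '' C))
        (G t - g t) t := by
      have hdec : ∀ s, sSup ((fun c => bregman f f' c (g s)) '' C)
          = (⟪s, g s⟫ - f (g s)) + sSup ((fun c => f c - ⟪s, c⟫) '' C) :=
        fun s => sup_decomp hf' hgU hgr hCne hCcp hCU s
      have hfun : (fun s => sSup ((fun c => f c - (⟪s, c⟫ : ℝ)) '' C))
          = fun s => sSup ((fun c => bregman f f' c (g s)) '' C) - (⟪s, g s⟫ - f (g s)) := by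
        funext s
        rw [hdec s]
        ring
      rw [hfun]
      exact hasGradientAt_sub' (hG t) (fstar_grad hconv.convexOn hf' hgU hgr hgcont t)
    have harg : ∀ y, y ∈ C → (∀ c ∈ C, f c - ⟪t, c⟫ ≤ f y - (⟪t, y⟫ : ℝ)) →
        y = -(G t - g t) := by
      intro y hyC hym
      refine argmax_eq_neg_grad (A := f y) hσgrad ?_ ?_
      · intro s
        have hle : f y - (⟪s, y⟫ : ℝ) ≤ sSup ((fun c => f c - (⟪s, c⟫ : ℝ)) '' C) :=
          le_csSup (hbdd s) (Set.mem_image_of_mem _ hyC)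
        linarith
      · exact (IsGreatest.csSup_eq ⟨Set.mem_image_of_mem _ hyC, by
          rintro _ ⟨c, hc, rfl⟩; exact hym c hc⟩).symm
    refine ⟨x, ⟨hxC, hxm'⟩, fun y hy => ?_⟩
    rw [harg y hy.1 hy.2, harg x hxC hxm']
  tfae_have 4 → 5 := by
    intro h4
    obtain ⟨c₁, hc₁⟩ := hCne
    refine ⟨c₁, Set.eq_singleton_iff_unique_mem.2 ⟨hc₁, fun c hc => ?_⟩⟩
    by_contra hne
    have ha : -c ∈ -C := Set.neg_mem_neg.2 hc
    have hb : -c₁ ∈ -C := Set.neg_mem_neg.2 hc₁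
    have h1 := h4.2 ha hb (by norm_num : (0:ℝ) ≤ 1/2) (by norm_num : (0:ℝ) ≤ 1/2) (by norm_num)
    have h2 := hconv.2 (hCU hc) (hCU hc₁) hne one_half_pos one_half_pos (by norm_num)
    have he : (1/2 : ℝ) • (-c) + (1/2 : ℝ) • (-c₁) = -((1/2 : ℝ) • c + (1/2 : ℝ) • c₁) := by
      module
    rw [he] at h1
    simp only [neg_neg, smul_eq_mul] at h1 h2
    linarith
  tfae_have 5 → 2 := by
    rintro ⟨c, rfl⟩
    refine ⟨fun _ => c, continuousOn_const, fun y hy => ⟨Set.mem_singleton c, ?_, ?_⟩⟩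
    · intro c' hc'
      rw [Set.mem_singleton_iff] at hc'
      subst hc'
      exact le_rfl
    · intro x hx _
      rwa [Set.mem_singleton_iff] at hx
  tfae_have 2 → 1 := by
    rintro ⟨Q, hQc, hQ⟩ y hy
    obtain ⟨h1, h2, h3⟩ := hQ y hy
    exact ⟨Q y, ⟨h1, h2⟩, fun x hx => h3 x hx.1 hx.2⟩
  tfae_have 5 → 3 := by
    rintro ⟨c, rfl⟩
    refine ⟨fun s => g s - c, hgcont.sub continuous_const, fun s => ?_⟩
    have hfun : (fun t => sSup ((fun c' => bregman f f' c' (g t)) '' {c}))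
        = fun t => (f c - ⟪t, c⟫) + (⟪t, g t⟫ - f (g t)) := by
      funext t
      rw [Set.image_singleton, csSup_singleton, hE]
    rw [hfun]
    have h1 : HasGradientAt (fun t : EuclideanSpace ℝ (Fin J) => f c - ⟪t, c⟫) (0 - c) s :=
      hasGradientAt_sub' (hasGradientAt_const s (f c)) (hasGradientAt_inner_right c s)
    have h2 := hasGradientAt_add' h1 (fstar_grad hconv.convexOn hf' hgU hgr hgcont s)
    have h3 : (0 : EuclideanSpace ℝ (Fin J)) - c + g s = g s - c := by abel
    rwa [h3] at h2
  tfae_have 5 → 4 := by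
    rintro ⟨c, rfl⟩
    constructor
    · rw [Set.neg_singleton]
      exact convex_singleton _
    · intro a ha b hb μ ν hμ hν hsum
      rw [Set.neg_singleton, Set.mem_singleton_iff] at ha hb
      subst ha; subst hb
      have hcomb : μ • (-c) + ν • (-c) = -c := by
        rw [← add_smul, hsum, one_smul]
      rw [hcomb]
      simp only [neg_neg, smul_eq_mul]
      have : μ * (-f c) + ν * (-f c) = -f c := by
        rw [← add_mul, hsum, one_mul]
      linarith
  tfae_finish
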